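/- Let n ≥ 2 be an integer, c > 0, and r, σ real numbers with 1 < r < n and 0 < σ < (r−1)c. For δ ∈ (0,1) define π0C = (r−1)c and π0D(δ) = (1−δ)·((n−1)rc/n + δσ) + δ²(r−1)c. If r > (σ+2c)n/((n+1)c), then there exists δ₀ ∈ (0,1) such that for all δ ∈ (δ₀,1): π0C ≥ π0D(δ). Conversely, if r < (σ+2c)n/((n+1)c), then there exists δ₀ ∈ (0,1) such that for all δ ∈ (δ₀,1): π0C < π0D(δ). -/

import Mathlib

/-- State-0 no-deviation condition of Table S1, rows 13–14: for `δ` close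
enough to 1, sticking to cooperation is at least as good as a one-shot
deviation to defection iff `r ≥ (σ+2c)n/((n+1)c)` (strict versions). -/
theorem rows13_14_state0_condition (n : ℕ) (hn : 2 ≤ n) (c r σ : ℝ)
    (hc : 0 < c) (hr1 : 1 < r) (hrn : r < (n : ℝ))
    (hσ0 : 0 < σ) (hσ : σ < (r - 1) * c) :
    (r > (σ + 2 * c) * n / (((n : ℝ) + 1) * c) →
      ∃ δ₀ ∈ Set.Ioo (0 : ℝ) 1, ∀ δ ∈ Set.Ioo δ₀ 1,
        (r - 1) * c ≥
          (1 - δ) * (((n : ℝ) - 1) * r * c / n + δ * σ)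
            + δ ^ 2 * (r - 1) * c) ∧
    (r < (σ + 2 * c) * n / (((n : ℝ) + 1) * c) →
      ∃ δ₀ ∈ Set.Ioo (0 : ℝ) 1, ∀ δ ∈ Set.Ioo δ₀ 1,
        (r - 1) * c <
          (1 - δ) * (((n : ℝ) - 1) * r * c / n + δ * σ)
            + δ ^ 2 * (r - 1) * c) := by
  have hn1 : (2 : ℝ) ≤ n := by exact_mod_cast hn
  have hn0 : (0 : ℝ) < n := by linarith
  have hden : (0 : ℝ) < ((n : ℝ) + 1) * c := by positivity
  set s : ℝ := (r - 1) * c - σ with hs_def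
  have hs : 0 < s := by simp only [hs_def]; linarith
  set g1 : ℝ := 2 * (r - 1) * c - ((n : ℝ) - 1) * r * c / n - σ with hg1_def
  have hgn : g1 * n = r * (((n : ℝ) + 1) * c) - (σ + 2 * c) * n := by
    rw [hg1_def]
    field_simp
    ring
  constructor
  · intro h
    have hkey : (σ + 2 * c) * n < r * (((n : ℝ) + 1) * c) :=
      (div_lt_iff₀ hden).mp h
    have hg1 : 0 < g1 := by nlinarith
    refine ⟨max (1 - g1 / s) (1 / 2), ⟨lt_of_lt_of_le (by norm_num) (le_max_right _ _),
      max_lt (by have := div_pos hg1 hs; linarith) (by norm_num)⟩, ?_⟩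
    rintro δ ⟨hδl, hδu⟩
    have h1δ : 0 < 1 - δ := by linarith
    have hlt : 1 - g1 / s < δ := lt_of_le_of_lt (le_max_left _ _) hδl
    have hδs : (1 - δ) * s < g1 := by
      have : 1 - δ < g1 / s := by linarith
      calc (1 - δ) * s < (g1 / s) * s := by exact mul_lt_mul_of_pos_right this hs
        _ = g1 := by field_simp
    have hgδ : 0 < (1 + δ) * (r - 1) * c - ((n : ℝ) - 1) * r * c / n - δ * σ := by
      have : (1 + δ) * (r - 1) * c - ((n : ℝ) - 1) * r * c / n - δ * σ
          = g1 - (1 - δ) * s := by simp only [hg1_def, hs_def]; ring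
      rw [this]; linarith
    have heq : (r - 1) * c - ((1 - δ) * (((n : ℝ) - 1) * r * c / n + δ * σ)
        + δ ^ 2 * (r - 1) * c)
        = (1 - δ) * ((1 + δ) * (r - 1) * c - ((n : ℝ) - 1) * r * c / n - δ * σ) := by
      ring
    nlinarith [mul_pos h1δ hgδ]
  · intro h
    have hkey : r * (((n : ℝ) + 1) * c) < (σ + 2 * c) * n :=
      (lt_div_iff₀ hden).mp h
    have hg1 : g1 < 0 := by nlinarith
    refine ⟨1 / 2, ⟨by norm_num, by norm_num⟩, ?_⟩
    rintro δ ⟨hδl, hδu⟩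
    have h1δ : 0 < 1 - δ := by linarith
    have hgδ : (1 + δ) * (r - 1) * c - ((n : ℝ) - 1) * r * c / n - δ * σ < 0 := by
      have : (1 + δ) * (r - 1) * c - ((n : ℝ) - 1) * r * c / n - δ * σ
          = g1 - (1 - δ) * s := by simp only [hg1_def, hs_def]; ring
      rw [this]; nlinarith [mul_pos h1δ hs]
    have heq : (r - 1) * c - ((1 - δ) * (((n : ℝ) - 1) * r * c / n + δ * σ)
        + δ ^ 2 * (r - 1) * c)
        = (1 - δ) * ((1 + δ) * (r - 1) * c - ((n : ℝ) - 1) * r * c / n - δ * σ) := by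
      ring
    nlinarith [mul_pos h1δ (neg_pos.mpr hgδ)]
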